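/- Fix a notation β and a non-decreasing function ξ^{β+1} majorizing the settling-time function for 0^(β+1). If T is a tree computable from 0^β that is uniquely (β+1)-small, and ζ, g are two distinct paths through T with ζ↾(x+1) ≠ g↾(x+1), then for every x, max(ζ(x), g(x)) ≥ ξ^{β+1}(x); consequently any non-decreasing h majorizing both ζ and g computes 0^(β+1) from 0^β. -/

import Mathlib

attribute [local instance] Classical.propDecidable

/-- Codes for oracle (Turing) machines: partial recursive operations relative to an oracle. -/
inductive OCode : Type
  | zero | succ | left | right | oracle
  | pair : OCode → OCode → OCode
  | comp : OCode → OCode → OCode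
  | prec : OCode → OCode → OCode
  | rfind' : OCode → OCode

/-- Evaluation of an oracle machine with (partial) oracle `g`. -/
def OCode.eval (g : ℕ →. ℕ) : OCode → ℕ →. ℕ
  | .zero => fun _ => Part.some 0
  | .succ => fun n => Part.some (n + 1)
  | .left => fun n => Part.some n.unpair.1
  | .right => fun n => Part.some n.unpair.2
  | .oracle => g
  | .pair cf cg => fun n => Nat.pair <$> OCode.eval g cf n <*> OCode.eval g cg n
  | .comp cf cg => fun n => OCode.eval g cg n >>= OCode.eval g cf
  | .prec cf cg => fun n =>
      n.unpair.2.rec (OCode.eval g cf n.unpair.1) fun y IH =>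
        IH >>= fun i => OCode.eval g cg (Nat.pair n.unpair.1 (Nat.pair y i))
  | .rfind' cf => fun n =>
      (Nat.rfind fun m => (fun x => x = 0) <$>
        OCode.eval g cf (Nat.pair n.unpair.1 (m + n.unpair.2))).map (· + n.unpair.2)

/-- An effective coding of oracle machine codes by natural numbers. -/
def OCode.encodeO : OCode → ℕ
  | .zero => 0
  | .succ => 1
  | .left => 2
  | .right => 3
  | .oracle => 4
  | .pair a b => 4 * Nat.pair a.encodeO b.encodeO + 5
  | .comp a b => 4 * Nat.pair a.encodeO b.encodeO + 6
  | .prec a b => 4 * Nat.pair a.encodeO b.encodeO + 7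
  | .rfind' a => 4 * a.encodeO + 8

/-- The total oracle corresponding to a total function. -/
def tot (f : ℕ → ℕ) : ℕ →. ℕ := fun n => Part.some (f n)

/-- The trivial (computable) oracle. -/
def zeroOracle : ℕ →. ℕ := tot fun _ => 0

/-- `maj f h` : `f` majorizes `h`, i.e. `f ≫ h`. -/
def maj (f h : ℕ → ℕ) : Prop := ∀ x, h x ≤ f x

/-- Turing reducibility of total functions. -/
def TuringLE (f g : ℕ → ℕ) : Prop :=
  ∃ c : OCode, ∀ x, OCode.eval (tot g) c x = Part.some (f x)

/-- The Turing jump of a total function (as the characteristic function of the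
relativized halting problem). -/
noncomputable def jumpF (f : ℕ → ℕ) : ℕ → ℕ := fun n =>
  if (∃ c : OCode, ∃ x, n = Nat.pair c.encodeO x ∧ (OCode.eval (tot f) c x).Dom) then 1 else 0

/-- Effective join of two total functions (interleaving). -/
def fjoin (f g : ℕ → ℕ) : ℕ → ℕ := fun n => if n.bodd then g n.div2 else f n.div2

/-- The initial segment (string) of length `n` of `f : ℕ → ℕ`. -/
def initSeg (f : ℕ → ℕ) (n : ℕ) : List ℕ := (List.range n).map f

/-- A tree is a set of strings closed under initial segments. -/
def IsTree (T : Set (List ℕ)) : Prop := ∀ σ ∈ T, ∀ τ : List ℕ, τ <+: σ → τ ∈ T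

/-- `f` is an (infinite) path through `T`. -/
def IsPathThrough (T : Set (List ℕ)) (f : ℕ → ℕ) : Prop := ∀ n, initSeg f n ∈ T

/-- `f` is the unique path through `T`. -/
def UniquePathThrough (T : Set (List ℕ)) (f : ℕ → ℕ) : Prop :=
  IsPathThrough T f ∧ ∀ g, IsPathThrough T g → g = f

/-- The characteristic function (on codes of strings) of a set of strings. -/
noncomputable def treeChi (T : Set (List ℕ)) : ℕ → ℕ := fun n =>
  if (∃ σ ∈ T, Encodable.encode σ = n) then 1 else 0

/-- `T` is a computable tree (its membership relation is computable). -/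
def ComputableTree (T : Set (List ℕ)) : Prop :=
  ∃ c : OCode, ∀ σ : List ℕ,
    OCode.eval zeroOracle c (Encodable.encode σ) = Part.some (if σ ∈ T then 1 else 0)

/-- The extendable nodes of `T`: those lying on an infinite path. -/
def ExtNode (T : Set (List ℕ)) : Set (List ℕ) :=
  {σ | σ ∈ T ∧ ∃ f, IsPathThrough T f ∧ initSeg f σ.length = σ}

/-- `f` is a non-isolated path of `T`: every initial segment of `f` extends to another path. -/
def NonIsolated (T : Set (List ℕ)) (f : ℕ → ℕ) : Prop :=
  ∀ n, ∃ g, IsPathThrough T g ∧ g ≠ f ∧ initSeg g n = initSeg f n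

/-- The finite partial oracle determined by the string `σ`. -/
def strOracle (σ : List ℕ) : ℕ →. ℕ := fun n =>
  if n < σ.length then Part.some (σ.getD n 0) else Part.none

/-- `h` is a modulus of computation for `g`. -/
def Modulus (h g : ℕ → ℕ) : Prop := ∀ f, maj f h → TuringLE g f

/-- `h` is a uniform modulus of computation for `g`. -/
def UniformModulus (h g : ℕ → ℕ) : Prop :=
  ∃ c : OCode, ∀ f, maj f h → ∀ x, OCode.eval (tot f) c x = Part.some (g x)

/-- `h` is a self-modulus. -/
def SelfModulus (h : ℕ → ℕ) : Prop := Modulus h h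

/-- `c` is a truth-table functional: total on every (total) oracle. -/
def ttTotal (c : OCode) : Prop := ∀ f : ℕ → ℕ, ∀ x, (OCode.eval (tot f) c x).Dom
/-- The value of the `e`-th partial recursive function at `n` (0 if divergent). -/
noncomputable def phi0 (e n : ℕ) : ℕ :=
  if h : ((Denumerable.ofNat Nat.Partrec.Code e).eval n).Dom
  then ((Denumerable.ofNat Nat.Partrec.Code e).eval n).get h else 0

/-- Convergence of the `e`-th partial recursive function at `n`. -/
def phi0Dom (e n : ℕ) : Prop := ((Denumerable.ofNat Nat.Partrec.Code e).eval n).Dom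

mutual
/-- Kleene's set `O` of ordinal notations: `1` denotes `0`, `2^a` the successor of `a`,
and `3·5^e` a limit along the effective sequence given by the `e`-th partial recursive
function (required to be total, into `O`, and increasing). -/
inductive KO : ℕ → Prop
  | one : KO 1
  | succ {a : ℕ} : KO a → KO (2 ^ a)
  | lim {e : ℕ} : (∀ n, phi0Dom e n) → (∀ n, KO (phi0 e n)) →
      (∀ n, KOlt (phi0 e n) (phi0 e (n + 1))) → KO (3 * 5 ^ e)
/-- The ordering `<_O` on Kleene's ordinal notations. -/
inductive KOlt : ℕ → ℕ → Prop
  | succ {a : ℕ} : KO a → KOlt a (2 ^ a)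
  | lim {e n : ℕ} : KO (3 * 5 ^ e) → KOlt (phi0 e n) (3 * 5 ^ e)
  | trans {a b c : ℕ} : KOlt a b → KOlt b c → KOlt a c
end

/-- `a ≤_O b`. -/
def KOle (a b : ℕ) : Prop := KOlt a b ∨ a = b

/-- The `n`-th element `a[n]` of the effective limit sequence of a limit notation `a = 3·5^e`. -/
noncomputable def fund (a n : ℕ) : ℕ := phi0 (Nat.log 5 (a / 3)) n

/-- `a` is a limit notation. -/
def IsLimO (a : ℕ) : Prop := KO a ∧ ∃ e, a = 3 * 5 ^ e

/-- `H` is a transfinite jump hierarchy along Kleene's `O` with base `g₀`: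
`H β` plays the role of `g₀^(β)`. -/
def IsJumpHierFrom (g₀ : ℕ → ℕ) (H : ℕ → ℕ → ℕ) : Prop :=
  H 1 = g₀ ∧ (∀ a, KO a → H (2 ^ a) = jumpF (H a)) ∧
  (∀ e, KO (3 * 5 ^ e) → ∀ x,
    H (3 * 5 ^ e) x = H (phi0 e (Nat.unpair x).1) (Nat.unpair x).2)

/-- `H` is the jump hierarchy over the empty set: `H β` plays the role of `0^(β)`. -/
def IsJumpHier (H : ℕ → ℕ → ℕ) : Prop := IsJumpHierFrom (fun _ => 0) H

/-- Identity code. -/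
def idO : OCode := .pair .left .right

lemma eval_idO (g : ℕ →. ℕ) (n : ℕ) : OCode.eval g idO n = Part.some n := by
  simp [OCode.eval, idO, Seq.seq]

/-- Add a constant. -/
def addk : ℕ → OCode
  | 0 => idO
  | k + 1 => .comp .succ (addk k)

lemma eval_addk (g : ℕ →. ℕ) (k n : ℕ) :
    OCode.eval g (addk k) n = Part.some (n + k) := by
  induction k with
  | zero => simp [addk, eval_idO]
  | succ k ih =>
      have h1 : OCode.eval g (addk (k + 1)) n =
          OCode.eval g (addk k) n >>= OCode.eval g .succ := rfl
      rw [h1, ih]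
      exact Part.bind_some _ _

/-- Addition code. -/
def addO : OCode := .prec idO (.comp .succ (.comp .right .right))

lemma eval_addO (g : ℕ →. ℕ) (a m : ℕ) :
    OCode.eval g addO (Nat.pair a m) = Part.some (a + m) := by
  induction m with
  | zero => simp [addO, OCode.eval, Seq.seq, Nat.pair_unpair, idO]
  | succ m ih =>
      have : OCode.eval g addO (Nat.pair a (m + 1)) =
          OCode.eval g addO (Nat.pair a m) >>= fun i =>
            OCode.eval g (.comp .succ (.comp .right .right)) (Nat.pair a (Nat.pair m i)) := by
        simp only [addO, OCode.eval, Nat.unpair_pair]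
      rw [this, ih]
      simp [OCode.eval, Nat.add_assoc]

/-- Doubling code. -/
def doubleO : OCode := .comp addO (.pair idO idO)

lemma eval_doubleO (g : ℕ →. ℕ) (n : ℕ) :
    OCode.eval g doubleO n = Part.some (2 * n) := by
  have h1 : OCode.eval g doubleO n =
      OCode.eval g (.pair idO idO) n >>= OCode.eval g addO := rfl
  have h2 : OCode.eval g (.pair idO idO) n = Part.some (Nat.pair n n) := by
    simp [OCode.eval, eval_idO, Seq.seq]
  rw [h1, h2]
  refine (Part.bind_some _ _).trans ?_
  simp [eval_addO, two_mul]

/-- Substitute a code for the oracle. -/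
def subst (d : OCode) : OCode → OCode
  | .zero => .zero
  | .succ => .succ
  | .left => .left
  | .right => .right
  | .oracle => d
  | .pair a b => .pair (subst d a) (subst d b)
  | .comp a b => .comp (subst d a) (subst d b)
  | .prec a b => .prec (subst d a) (subst d b)
  | .rfind' a => .rfind' (subst d a)

lemma eval_subst (g : ℕ →. ℕ) (d : OCode) (f : ℕ → ℕ)
    (hd : ∀ n, OCode.eval g d n = Part.some (f n)) :
    ∀ c : OCode, OCode.eval g (subst d c) = OCode.eval (tot f) c := by
  intro c
  induction c <;> funext n <;> simp [OCode.eval, subst, tot, *]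

/-- let `ξ` be non-decreasing and a uniform modulus for `0^(b+1)`
(e.g. the settling-time function for `0^(b+1)`).  If `T` is a tree computable from `0^(b)`
that is uniquely `(b+1)`-small and `ζ, g` are distinct paths through `T`, then wherever
`ζ↾(x+1) ≠ g↾(x+1)` we have `max (ζ x) (g x) ≥ ξ x`; consequently any non-decreasing `h`
majorizing both `ζ` and `g` computes `0^(b+1)` from `0^(b)`. -/
theorem uniquely_small_pair_computes_jump
    (b : ℕ) (hb : KO b) (H : ℕ → ℕ → ℕ) (hH : IsJumpHier H)
    (ξ : ℕ → ℕ) (hmono : Monotone ξ)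
    (hxi : ∃ c : OCode, ∀ f, maj f ξ → ∀ x,
      OCode.eval (tot f) c x = Part.some (H (2 ^ b) x))
    (T : Set (List ℕ)) (hT : IsTree T) (hTc : TuringLE (treeChi T) (H b))
    (hsmall : ∀ f g : ℕ → ℕ, IsPathThrough T f → IsPathThrough T g →
      ∀ x, f x ≤ ξ x → g x ≤ ξ x → ∀ y ≤ x, f y = g y)
    (ζ g : ℕ → ℕ) (hζ : IsPathThrough T ζ) (hg : IsPathThrough T g) (hne : ζ ≠ g) :
    (∀ x, (∃ y ≤ x, ζ y ≠ g y) → ξ x ≤ max (ζ x) (g x)) ∧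
    (∀ h : ℕ → ℕ, Monotone h → maj h ζ → maj h g →
      TuringLE (H (2 ^ b)) (fjoin h (H b))) := by
  obtain ⟨y₀, hy₀⟩ : ∃ y, ζ y ≠ g y := by
    by_contra hc; push_neg at hc; exact hne (funext hc)
  have part1 : ∀ x, (∃ y ≤ x, ζ y ≠ g y) → ξ x ≤ max (ζ x) (g x) := by
    intro x ⟨y, hyx, hyne⟩
    by_contra hlt
    push_neg at hlt
    have h1 : ζ x ≤ ξ x := le_of_lt (lt_of_le_of_lt (le_max_left _ _) hlt)
    have h2 : g x ≤ ξ x := le_of_lt (lt_of_le_of_lt (le_max_right _ _) hlt)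
    exact hyne (hsmall ζ g hζ hg x h1 h2 y hyx)
  refine ⟨part1, ?_⟩
  intro h hhmono hhζ hhg
  obtain ⟨c, hc⟩ := hxi
  set G : ℕ → ℕ := fjoin h (H b) with hG
  have hGeven : ∀ x, G (2 * x) = h x := by
    intro x
    simp [hG, fjoin, Nat.bodd_mul, Nat.div2_val, Nat.mul_div_cancel_left _ (by norm_num : 0 < 2)]
  set f : ℕ → ℕ := fun x => h x + ξ y₀ with hf
  have hmajf : maj f ξ := by
    intro x
    rcases le_or_gt y₀ x with hx | hx
    · have : ξ x ≤ max (ζ x) (g x) := part1 x ⟨y₀, hx, hy₀⟩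
      calc ξ x ≤ max (ζ x) (g x) := this
        _ ≤ h x := max_le (hhζ x) (hhg x)
        _ ≤ h x + ξ y₀ := Nat.le_add_right _ _
    · calc ξ x ≤ ξ y₀ := hmono (le_of_lt hx)
        _ ≤ h x + ξ y₀ := Nat.le_add_left _ _
  -- code computing f from oracle G
  set d : OCode := .comp (addk (ξ y₀)) (.comp .oracle doubleO) with hd
  have hdeval : ∀ n, OCode.eval (tot G) d n = Part.some (f n) := by
    intro n
    have h1 : OCode.eval (tot G) d n =
        (OCode.eval (tot G) doubleO n >>= tot G) >>= OCode.eval (tot G) (addk (ξ y₀)) := rfl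
    rw [h1, eval_doubleO]
    refine ((congrArg (· >>= OCode.eval (tot G) (addk (ξ y₀))) (Part.bind_some _ _))).trans ?_
    refine (Part.bind_some _ _).trans ?_
    simp [tot, hGeven n, eval_addk, hf]
  refine ⟨subst d c, fun x => ?_⟩
  rw [eval_subst (tot G) d f hdeval c]
  exact hc f hmajf x
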